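/- arXiv:2310.04332 — 3 statements merged into one kernel-verified Lean document; each statement's English description precedes it below -/
import Mathlib

section
/- Let G be an undirected simple graph, T ⊆ V(G) a set of terminals, and S ⊆ V(G) \ T a nonempty set. Then the following are equivalent: (1) for every pair of distinct terminals t_i, t_j ∈ T, the graph G−S does not contain two internally vertex-disjoint t_i–t_j paths; (2) for every pair of distinct terminals t_i, t_j ∈ T there exists a vertex v ∈ V(G) \ T such that t_i and t_j lie in different connected components of G−(S ∪ {v}); (3) T is an independent set in G−S and G−S contains no simple cycle passing through at least two vertices of T. -/
open SimpleGraph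

variable {V : Type*}

/-- The graph obtained from `G` by deleting a set `S` of vertices (kept as
isolated vertices; all edges incident to `S` are removed). -/
def SimpleGraph.eraseVerts (G : SimpleGraph V) (S : Set V) : SimpleGraph V where
  Adj u v := G.Adj u v ∧ u ∉ S ∧ v ∉ S
  symm := ⟨fun u v ⟨h, hu, hv⟩ => ⟨h.symm, hv, hu⟩⟩
  loopless := ⟨fun v h => G.loopless.irrefl v h.1⟩

/-- Two walks with the same endpoints are internally vertex-disjoint if they
share no vertex other than their common endpoints. -/
def IntDisjoint {G : SimpleGraph V} {a b : V} (p q : G.Walk a b) : Prop :=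
  ∀ x ∈ p.support, x ∈ q.support → x = a ∨ x = b

/-- There exist two internally vertex-disjoint `a`–`b` paths in `G`
(the two paths may coincide if they have no internal vertices). -/
def TwoIVD (G : SimpleGraph V) (a b : V) : Prop :=
  ∃ p q : G.Walk a b, p.IsPath ∧ q.IsPath ∧ IntDisjoint p q

/-- `S` is a multiway near-separator of `(G, T)`. -/
def IsMWNS (G : SimpleGraph V) (T S : Set V) : Prop :=
  S ⊆ Tᶜ ∧ ∀ t₁ ∈ T, ∀ t₂ ∈ T, t₁ ≠ t₂ → ¬ TwoIVD (G.eraseVerts S) t₁ t₂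

/-- `G` contains a simple cycle through at least two terminals of `T`. -/
def HasTCycle (G : SimpleGraph V) (T : Set V) : Prop :=
  ∃ (v : V) (c : G.Walk v v), c.IsCycle ∧
    ∃ t₁ ∈ T, ∃ t₂ ∈ T, t₁ ≠ t₂ ∧ t₁ ∈ c.support ∧ t₂ ∈ c.support

/-- `v` is a cut vertex of `G`. -/
def IsCutVertex (G : SimpleGraph V) (v : V) : Prop :=
  ∃ a b : V, a ≠ v ∧ b ≠ v ∧ G.Reachable a b ∧ ¬ (G.eraseVerts {v}).Reachable a b

/-- `B` is a block of `G`: a maximal vertex set inducing a connected subgraph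
without a cut vertex. -/
def IsBlock (G : SimpleGraph V) (B : Set V) : Prop :=
  B.Nonempty ∧ (G.induce B).Connected ∧ (∀ v, ¬ IsCutVertex (G.induce B) v) ∧
  ∀ B' : Set V, B ⊆ B' → (G.induce B').Connected →
    (∀ v, ¬ IsCutVertex (G.induce B') v) → B' = B

namespace SimpleGraph

variable {G : SimpleGraph V}

lemma eraseVerts_eraseVerts (G : SimpleGraph V) (A B : Set V) :
    (G.eraseVerts A).eraseVerts B = G.eraseVerts (A ∪ B) := by
  ext u v
  simp only [eraseVerts, Set.mem_union]
  tauto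

lemma eraseVerts_adj {A : Set V} {u v : V} :
    (G.eraseVerts A).Adj u v ↔ G.Adj u v ∧ u ∉ A ∧ v ∉ A := Iff.rfl

/-- Every vertex on a walk in `G.eraseVerts A` starting outside `A` avoids `A`. -/
lemma Walk.support_not_mem_of_erase {A : Set V} {a b : V} (q : (G.eraseVerts A).Walk a b)
    (ha : a ∉ A) : ∀ x ∈ q.support, x ∉ A := by
  induction q with
  | nil => intro x hx; simp only [Walk.support_nil, List.mem_singleton] at hx; subst hx; exact ha
  | cons h q ih =>
    intro x hx
    rw [Walk.support_cons, List.mem_cons] at hx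
    rcases hx with rfl | hx
    · exact h.2.1
    · exact ih h.2.2 x hx

/-- A walk in `G` avoiding `A` transfers to `G.eraseVerts A`. -/
lemma Walk.toEraseVerts {A : Set V} {a b : V} (q : G.Walk a b)
    (hq : ∀ x ∈ q.support, x ∉ A) : ∃ q' : (G.eraseVerts A).Walk a b, q'.support = q.support := by
  refine ⟨q.transfer (G.eraseVerts A) ?_, q.support_transfer _⟩
  intro e he
  induction e with
  | h u v =>
    rw [SimpleGraph.mem_edgeSet, eraseVerts_adj]
    exact ⟨q.edges_subset_edgeSet he, hq u (q.fst_mem_support_of_mem_edges he),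
      hq v (q.snd_mem_support_of_mem_edges he)⟩

lemma reachable_erase_of_walk {A : Set V} {a b : V} (q : G.Walk a b)
    (hq : ∀ x ∈ q.support, x ∉ A) : (G.eraseVerts A).Reachable a b := by
  obtain ⟨q', -⟩ := q.toEraseVerts hq
  exact q'.reachable

lemma exists_walk_avoid {A : Set V} {a b : V} (ha : a ∉ A)
    (h : (G.eraseVerts A).Reachable a b) : ∃ q : G.Walk a b, ∀ x ∈ q.support, x ∉ A := by
  obtain ⟨q⟩ := h
  refine ⟨q.transfer G (fun e he => ?_), ?_⟩
  · induction e with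
    | h u v =>
      rw [mem_edgeSet]
      exact (q.edges_subset_edgeSet he).1
  · rw [Walk.support_transfer]
    exact q.support_not_mem_of_erase ha

/-- A vertex `v` with `¬(G.eraseVerts {v}).Reachable a b` lies on every `a`–`b` walk. -/
lemma mem_support_of_not_reachable_erase {v a b : V}
    (h : ¬ (G.eraseVerts {v}).Reachable a b) (q : G.Walk a b) : v ∈ q.support := by
  by_contra hv
  refine h (reachable_erase_of_walk q ?_)
  intro x hx hxv
  rw [Set.mem_singleton_iff] at hxv
  exact hv (hxv ▸ hx)

lemma IsPath.append_of {a x b : V} {p : G.Walk a x} {q : G.Walk x b}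
    (hp : p.IsPath) (hq : q.IsPath)
    (h : ∀ y ∈ p.support, y ∈ q.support → y = x) : (p.append q).IsPath := by
  rw [Walk.isPath_def, Walk.support_append]
  refine List.Nodup.append hp.support_nodup ?_ ?_
  · have := hq.support_nodup
    rw [q.support_eq_cons] at this
    exact this.of_cons
  · intro y hyp hyq
    have hy : y ∈ q.support := by rw [q.support_eq_cons]; exact List.mem_cons_of_mem _ hyq
    have hyx : y = x := h y hyp hy
    subst hyx
    have := hq.support_nodup
    rw [q.support_eq_cons, List.nodup_cons] at this
    exact this.1 hyq

lemma end_not_mem_takeUntil [DecidableEq V] {a b x : V} {p : G.Walk a b} (hp : p.IsPath)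
    (hx : x ∈ p.support) (hxb : x ≠ b) : b ∉ (p.takeUntil x hx).support := by
  intro hb
  have hspec := p.take_spec hx
  have hnd := hp.support_nodup
  rw [← hspec, Walk.support_append] at hnd
  have hdrop : b ∈ (p.dropUntil x hx).support.tail := by
    have hbd : b ∈ (p.dropUntil x hx).support := Walk.end_mem_support _
    rw [(p.dropUntil x hx).support_eq_cons, List.mem_cons] at hbd
    rcases hbd with rfl | hbd
    · exact absurd rfl hxb
    · exact hbd
  exact (List.disjoint_of_nodup_append hnd) hb hdrop

lemma adj_toWalk_isPath {a b : V} (h : G.Adj a b) : h.toWalk.IsPath := by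
  simp [Walk.isPath_def, Adj.toWalk, h.ne]

lemma twoIVD_of_adj {a b : V} (h : G.Adj a b) : TwoIVD G a b := by
  refine ⟨h.toWalk, h.toWalk, adj_toWalk_isPath h, adj_toWalk_isPath h, ?_⟩
  intro x hx _
  simp only [Adj.toWalk, Walk.support_cons, Walk.support_nil, List.mem_cons,
    List.mem_singleton, List.not_mem_nil, or_false] at hx
  exact hx

/-- Walking from `a`, the first vertex of the walk belonging to `M`. -/
lemma Walk.exists_first_mem {M : Set V} {a b : V} (R : G.Walk a b) (hb : b ∈ M) :
    ∃ x, x ∈ M ∧ ∃ r : G.Walk a x, (∀ y ∈ r.support, y ∈ M → y = x) ∧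
      (∀ y ∈ r.support, y ∈ R.support) ∧ (R.IsPath → r.IsPath) := by
  induction R with
  | nil =>
    exact ⟨_, hb, Walk.nil, by simp, by simp, fun _ => Walk.IsPath.nil⟩
  | @cons u c b h R ih =>
    by_cases hu : u ∈ M
    · refine ⟨u, hu, Walk.nil, by simp, by simp, fun _ => Walk.IsPath.nil⟩
    · obtain ⟨x, hx, r, h1, h2, h3⟩ := ih hb
      refine ⟨x, hx, Walk.cons h r, ?_, ?_, ?_⟩
      · intro y hy hyM
        rw [Walk.support_cons, List.mem_cons] at hy
        rcases hy with rfl | hy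
        · exact absurd hyM hu
        · exact h1 y hy hyM
      · intro y hy
        rw [Walk.support_cons, List.mem_cons] at hy
        rw [Walk.support_cons, List.mem_cons]
        rcases hy with rfl | hy
        · exact Or.inl rfl
        · exact Or.inr (h2 y hy)
      · intro hP
        rw [Walk.cons_isPath_iff] at hP ⊢
        exact ⟨h3 hP.1, fun hc => hP.2 (h2 u hc)⟩

/-- Key step: the set of vertices two-connected to `a` grows along edges that are
not separated from `a` by their other endpoint. -/
lemma wstep {a u w : V} (hu : u = a ∨ TwoIVD G a u) (huw : G.Adj u w)
    {R : G.Walk a w} (hR : R.IsPath) (hRu : u ∉ R.support) : w = a ∨ TwoIVD G a w := by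
  classical
  by_cases hwa : w = a
  · exact Or.inl hwa
  rcases hu with rfl | ⟨P, Q, hP, hQ, hPQ⟩
  · exact Or.inr (twoIVD_of_adj huw)
  right
  set M : Set V := {y | y ∈ P.support ∨ y ∈ Q.support} with hMdef
  have haM : a ∈ M := Or.inl P.start_mem_support
  obtain ⟨x, hxM, r, h1, h2, h3⟩ := R.reverse.exists_first_mem (M := M) haM
  have hr : r.IsPath := h3 hR.reverse
  have hrsub : ∀ y ∈ r.support, y ∈ R.support := by
    intro y hy
    have := h2 y hy
    rwa [Walk.support_reverse, List.mem_reverse] at this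
  have hur : u ∉ r.support := fun hc => hRu (hrsub u hc)
  have hxu : x ≠ u := fun h => hur (h ▸ r.end_mem_support)
  have key : ∀ (P' Q' : G.Walk a u), P'.IsPath → Q'.IsPath → IntDisjoint P' Q' →
      (∀ y ∈ P'.support, y ∈ M) → (∀ y ∈ Q'.support, y ∈ M) →
      ∀ hxP : x ∈ P'.support, TwoIVD G a w := by
    intro P' Q' hP' hQ' hd hMP hMQ hxP
    have hwQ' : w ∉ Q'.support := by
      intro hwQ
      have hwx : w = x := h1 w r.start_mem_support (hMQ w hwQ)
      rcases hd x (hwx ▸ hxP) (hwx ▸ hwQ) with hxa | hxu'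
      · exact hwa (hwx.trans hxa)
      · exact hxu hxu'
    have hunotake : u ∉ (P'.takeUntil x hxP).support :=
      end_not_mem_takeUntil hP' hxP hxu
    refine ⟨(P'.takeUntil x hxP).append r.reverse, Q'.append huw.toWalk, ?_, ?_, ?_⟩
    · refine IsPath.append_of (hP'.takeUntil hxP) hr.reverse ?_
      intro y hy1 hy2
      rw [Walk.support_reverse, List.mem_reverse] at hy2
      exact h1 y hy2 (hMP y (Walk.support_takeUntil_subset P' hxP hy1))
    · refine IsPath.append_of hQ' (adj_toWalk_isPath huw) ?_
      intro y hy1 hy2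
      simp only [Adj.toWalk, Walk.support_cons, Walk.support_nil, List.mem_cons,
        List.mem_singleton, List.not_mem_nil, or_false] at hy2
      rcases hy2 with rfl | rfl
      · rfl
      · exact absurd hy1 hwQ'
    · intro y hy1 hy2
      rw [Walk.mem_support_append_iff] at hy1 hy2
      have hy2' : y ∈ Q'.support ∨ y = u ∨ y = w := by
        rcases hy2 with hy2 | hy2
        · exact Or.inl hy2
        · simp only [Adj.toWalk, Walk.support_cons, Walk.support_nil, List.mem_cons,
            List.mem_singleton, List.not_mem_nil, or_false] at hy2
          exact Or.inr hy2
      rcases hy1 with hy1 | hy1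
      · -- y on the take-part
        have hyP : y ∈ P'.support := Walk.support_takeUntil_subset P' hxP hy1
        rcases hy2' with hyQ | hyu | hyw
        · rcases hd y hyP hyQ with hya | hyu
          · exact Or.inl hya
          · exact absurd (hyu ▸ hy1) hunotake
        · exact absurd (hyu ▸ hy1) hunotake
        · exact Or.inr hyw
      · -- y on r
        rw [Walk.support_reverse, List.mem_reverse] at hy1
        rcases hy2' with hyQ | hyu | hyw
        · have hyx : y = x := h1 y hy1 (hMQ y hyQ)
          subst hyx
          rcases hd y hxP hyQ with hya | hyu
          · exact Or.inl hya
          · exact absurd hyu hxu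
        · exact absurd (hyu ▸ hy1) hur
        · exact Or.inr hyw
  rcases hxM with hxP | hxQ
  · exact key P Q hP hQ hPQ (fun y hy => Or.inl hy) (fun y hy => Or.inr hy) hxP
  · exact key Q P hQ hP (fun y h1 h2 => hPQ y h2 h1)
      (fun y hy => Or.inr hy) (fun y hy => Or.inl hy) hxQ

end SimpleGraph

section SEP
open SimpleGraph
variable {V : Type*} {G : SimpleGraph V}
namespace SimpleGraph

lemma sep_step {a : V} : ∀ {c b : V} (p : G.Walk c b), p.IsPath →
    (c = a ∨ TwoIVD G a c) → ¬ (b = a ∨ TwoIVD G a b) →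
    ∃ v w, (v = a ∨ TwoIVD G a v) ∧ ¬ (w = a ∨ TwoIVD G a w) ∧ G.Adj v w ∧
      ∃ s : G.Walk w b, v ∉ s.support := by
  intro c b p
  induction p with
  | nil => intro _ hc hb; exact absurd hc hb
  | @cons u m b h p ih =>
    intro hp hWu hWb
    by_cases hm : m = a ∨ TwoIVD G a m
    · exact ih (hp.of_cons) hm hWb
    · rw [Walk.cons_isPath_iff] at hp
      exact ⟨u, m, hWu, hm, h, p, hp.2⟩

/-- Local Menger for two paths: if there are no two internally disjoint `a`–`b`
paths, some vertex other than `a`, `b` separates them. -/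
lemma sep_exists {a b : V} (hab : a ≠ b) (hn : ¬ TwoIVD G a b) (hr : G.Reachable a b) :
    ∃ v, v ≠ a ∧ v ≠ b ∧ ¬ (G.eraseVerts {v}).Reachable a b := by
  classical
  obtain ⟨p₀⟩ := hr
  have hWb : ¬ (b = a ∨ TwoIVD G a b) := by
    rintro (rfl | h)
    · exact hab rfl
    · exact hn h
  obtain ⟨v, w, hWv, hWw, hadj, s, hvs⟩ :=
    sep_step p₀.bypass p₀.bypass_isPath (Or.inl rfl) hWb
  have hva : v ≠ a := by
    rintro rfl
    exact hWw (Or.inr (twoIVD_of_adj hadj))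
  have hvb : v ≠ b := by
    rintro rfl
    exact hWb hWv
  refine ⟨v, hva, hvb, fun hre => ?_⟩
  obtain ⟨q, hq⟩ := exists_walk_avoid (by simpa using hva.symm) hre
  have hqv : v ∉ q.support := fun hc => (hq v hc) rfl
  set t : G.Walk a w := q.append s.reverse with ht
  have hvt : v ∉ t.support := by
    rw [ht, Walk.mem_support_append_iff]
    rintro (hc | hc)
    · exact hqv hc
    · rw [Walk.support_reverse, List.mem_reverse] at hc
      exact hvs hc
  have hvR : v ∉ t.bypass.support := fun hc => hvt (t.support_bypass_subset hc)
  exact hWw (wstep hWv hadj t.bypass_isPath hvR)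

end SimpleGraph
end SEP

section NOTT
open SimpleGraph
variable {V : Type*} {G : SimpleGraph V}
namespace SimpleGraph

lemma sep_notT {T : Set V} (P1 : ∀ t₁ ∈ T, ∀ t₂ ∈ T, t₁ ≠ t₂ → ¬ TwoIVD G t₁ t₂)
    {t₁ t₂ : V} (h1 : t₁ ∈ T) (h2 : t₂ ∈ T) (hne : t₁ ≠ t₂) (hr : G.Reachable t₁ t₂) :
    ∃ v ∉ T, ¬ (G.eraseVerts {v}).Reachable t₁ t₂ := by
  classical
  obtain ⟨v₀, hv₀a, hv₀b, hv₀⟩ := sep_exists hne (P1 t₁ h1 t₂ h2 hne) hr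
  have hrv₀ : G.Reachable t₁ v₀ := by
    obtain ⟨q₀⟩ := hr
    have hm : v₀ ∈ q₀.support := mem_support_of_not_reachable_erase hv₀ q₀
    exact (q₀.takeUntil v₀ hm).reachable
  have main : ∀ n : ℕ, ∀ v : V, G.dist t₁ v ≤ n → v ≠ t₁ → v ≠ t₂ →
      ¬ (G.eraseVerts {v}).Reachable t₁ t₂ → G.Reachable t₁ v →
      ∃ u ∉ T, ¬ (G.eraseVerts {u}).Reachable t₁ t₂ := by
    intro n
    induction n with
    | zero =>
      intro v hd hvt₁ _ _ hrv
      exact absurd ((hrv.dist_eq_zero_iff).mp (Nat.le_zero.mp hd)).symm hvt₁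
    | succ n ih =>
      intro v hd hvt₁ hvt₂ hsep hrv
      by_cases hvT : v ∈ T
      · have hn2 : ¬ TwoIVD G t₁ v := P1 t₁ h1 v hvT (Ne.symm hvt₁)
        obtain ⟨w, hwt₁, hwv, hsw⟩ := sep_exists (Ne.symm hvt₁) hn2 hrv
        obtain ⟨p, hpp, hpl⟩ := hrv.exists_path_of_dist
        have hwp : w ∈ p.support := mem_support_of_not_reachable_erase hsw p
        have hwt₂ : w ≠ t₂ := by
          rintro rfl
          have hvnot : v ∉ (p.takeUntil w hwp).support :=
            end_not_mem_takeUntil hpp hwp (Ne.symm hvt₂)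
          refine hsep (reachable_erase_of_walk (p.takeUntil w hwp) ?_)
          intro x hx hxv
          rw [Set.mem_singleton_iff] at hxv
          exact hvnot (hxv ▸ hx)
        have hwsep : ¬ (G.eraseVerts {w}).Reachable t₁ t₂ := by
          intro hre
          obtain ⟨q, hq⟩ := exists_walk_avoid
            (show t₁ ∉ ({w} : Set V) by simpa using Ne.symm hwt₁) hre
          have hvq : v ∈ q.support := mem_support_of_not_reachable_erase hsep q
          refine hsw (reachable_erase_of_walk (q.takeUntil v hvq) ?_)
          intro x hx hxw
          rw [Set.mem_singleton_iff] at hxw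
          exact (hq x (Walk.support_takeUntil_subset q hvq hx)) hxw
        have hdist : G.dist t₁ w ≤ n := by
          have ha : G.dist t₁ w ≤ (p.takeUntil w hwp).length := dist_le _
          have hb : (p.takeUntil w hwp).length + (p.dropUntil w hwp).length = p.length := by
            have := congrArg Walk.length (p.take_spec hwp)
            rwa [Walk.length_append] at this
          have hc : (p.dropUntil w hwp).length ≠ 0 := fun h0 =>
            hwv (Walk.eq_of_length_eq_zero h0)
          have hdl : G.dist t₁ v ≤ n + 1 := hd
          omega
        exact ih w hdist hwt₁ hwt₂ hwsep (p.takeUntil w hwp).reachable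
      · exact ⟨v, hvT, hsep⟩
  exact main (G.dist t₁ v₀) v₀ le_rfl hv₀a hv₀b hv₀ hrv₀

end SimpleGraph
end NOTT

section CYC
open SimpleGraph
variable {V : Type*} {G : SimpleGraph V}
namespace SimpleGraph

lemma Walk.end_mem_tail_support_of_ne_nil {v : V} (c : G.Walk v v) (hc : c ≠ Walk.nil) :
    v ∈ c.support.tail := by
  cases c with
  | nil => exact absurd rfl hc
  | cons h q => simpa using q.end_mem_support

lemma twoIVD_of_cycle {v t₁ t₂ : V} {c : G.Walk v v} (hc : c.IsCycle) (h1 : t₁ ∈ c.support)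
    (h2 : t₂ ∈ c.support) (hne : t₁ ≠ t₂) : TwoIVD G t₁ t₂ := by
  classical
  set c' := c.rotate t₁ h1 with hc'def
  have hc' : c'.IsCycle := hc.rotate h1
  have h2' : t₂ ∈ c'.support := by
    rw [c'.support_eq_cons, List.mem_cons]
    right
    rw [(c.support_rotate t₁ h1).mem_iff]
    rw [c.support_eq_cons, List.mem_cons] at h2
    rcases h2 with rfl | h2
    · exact c.end_mem_tail_support_of_ne_nil hc.ne_nil
    · exact h2
  set p := c'.takeUntil t₂ h2' with hpdef
  set q' := c'.dropUntil t₂ h2' with hq'def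
  have hsup : c'.support = p.support ++ q'.support.tail := by
    conv_lhs => rw [← c'.take_spec h2']
    rw [Walk.support_append]
  have ctail : c'.support.tail = p.support.tail ++ q'.support.tail := by
    rw [hsup, List.tail_append_of_ne_nil (Walk.support_ne_nil _)]
  have hnod : (p.support.tail ++ q'.support.tail).Nodup := ctail ▸ hc'.support_nodup
  have ndp : p.support.tail.Nodup := hnod.of_append_left
  have ndq : q'.support.tail.Nodup := hnod.of_append_right
  have disj : p.support.tail.Disjoint q'.support.tail := List.disjoint_of_nodup_append hnod
  have ht₁q : t₁ ∈ q'.support.tail := by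
    have := q'.end_mem_support
    rw [q'.support_eq_cons, List.mem_cons] at this
    rcases this with h' | h'
    · exact absurd h' hne
    · exact h'
  have ht₂p : t₂ ∈ p.support.tail := by
    have := p.end_mem_support
    rw [p.support_eq_cons, List.mem_cons] at this
    rcases this with h' | h'
    · exact absurd h' hne.symm
    · exact h'
  have hp : p.IsPath := by
    rw [Walk.isPath_def, p.support_eq_cons]
    exact List.nodup_cons.mpr ⟨fun h' => (disj h') ht₁q, ndp⟩
  have hq' : q'.IsPath := by
    rw [Walk.isPath_def, q'.support_eq_cons]
    exact List.nodup_cons.mpr ⟨fun h' => (disj ht₂p) h', ndq⟩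
  refine ⟨p, q'.reverse, hp, hq'.reverse, ?_⟩
  intro x hx1 hx2
  rw [Walk.support_reverse, List.mem_reverse] at hx2
  rw [p.support_eq_cons, List.mem_cons] at hx1
  rw [q'.support_eq_cons, List.mem_cons] at hx2
  rcases hx1 with rfl | hx1
  · exact Or.inl rfl
  rcases hx2 with rfl | hx2
  · exact Or.inr rfl
  · exact absurd hx2 (disj hx1)

lemma adj_or_cycle_of_twoIVD {t₁ t₂ : V} (hne : t₁ ≠ t₂) (h : TwoIVD G t₁ t₂) :
    G.Adj t₁ t₂ ∨ ∃ (v : V) (c : G.Walk v v), c.IsCycle ∧ t₁ ∈ c.support ∧ t₂ ∈ c.support := by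
  obtain ⟨p, q, hp, hq, hd⟩ := h
  cases p with
  | nil => exact absurd rfl hne
  | @cons _ m _ hadj p' =>
    by_cases hm : m = t₂
    · exact Or.inl (hm ▸ hadj)
    right
    rw [Walk.cons_isPath_iff] at hp
    obtain ⟨hp', ht₁p'⟩ := hp
    have htail : (p'.append q.reverse).IsPath := by
      refine IsPath.append_of hp' hq.reverse ?_
      intro y hy1 hy2
      rw [Walk.support_reverse, List.mem_reverse] at hy2
      have hyp : y ∈ (Walk.cons hadj p').support := by
        rw [Walk.support_cons]; exact List.mem_cons_of_mem _ hy1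
      rcases hd y hyp hy2 with rfl | rfl
      · exact absurd hy1 ht₁p'
      · rfl
    refine ⟨t₁, Walk.cons hadj (p'.append q.reverse), ?_, Walk.start_mem_support _, ?_⟩
    · rw [Walk.cons_isCycle_iff]
      refine ⟨htail, ?_⟩
      intro he
      rw [Walk.edges_append, List.mem_append] at he
      rcases he with he | he
      · exact ht₁p' (p'.fst_mem_support_of_mem_edges he)
      · rw [Walk.edges_reverse, List.mem_reverse] at he
        have hmq : m ∈ q.support := q.snd_mem_support_of_mem_edges he
        have hmp : m ∈ (Walk.cons hadj p').support := by
          rw [Walk.support_cons]; exact List.mem_cons_of_mem _ p'.start_mem_support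
        rcases hd m hmp hmq with hma | hmb
        · exact hadj.ne' hma
        · exact hm hmb
    · rw [Walk.support_cons]
      refine List.mem_cons_of_mem _ ?_
      rw [Walk.mem_support_append_iff]
      exact Or.inl p'.end_mem_support

end SimpleGraph
end CYC


theorem stmt0 (G : SimpleGraph V) (T S : Set V) (hS : S.Nonempty) (hST : S ⊆ Tᶜ) :
    ((∀ t₁ ∈ T, ∀ t₂ ∈ T, t₁ ≠ t₂ → ¬ TwoIVD (G.eraseVerts S) t₁ t₂) ↔
      (∀ t₁ ∈ T, ∀ t₂ ∈ T, t₁ ≠ t₂ →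
        ∃ v ∈ Tᶜ, ¬ (G.eraseVerts (S ∪ {v})).Reachable t₁ t₂))
    ∧ ((∀ t₁ ∈ T, ∀ t₂ ∈ T, t₁ ≠ t₂ → ¬ TwoIVD (G.eraseVerts S) t₁ t₂) ↔
      ((∀ t₁ ∈ T, ∀ t₂ ∈ T, ¬ (G.eraseVerts S).Adj t₁ t₂) ∧
        ¬ HasTCycle (G.eraseVerts S) T)) := by
  constructor
  · constructor
    · -- (1) → (2)
      intro P1 t₁ h1 t₂ h2 hne
      by_cases hreach : (G.eraseVerts S).Reachable t₁ t₂
      · obtain ⟨v, hvT, hvsep⟩ := SimpleGraph.sep_notT P1 h1 h2 hne hreach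
        refine ⟨v, hvT, ?_⟩
        rw [← SimpleGraph.eraseVerts_eraseVerts]
        exact hvsep
      · obtain ⟨s₀, hs₀⟩ := hS
        refine ⟨s₀, hST hs₀, ?_⟩
        have huS : S ∪ {s₀} = S := by
          rw [Set.union_singleton, Set.insert_eq_self]
          exact hs₀
        rw [huS]
        exact hreach
    · -- (2) → (1)
      intro P2 t₁ h1 t₂ h2 hne htwo
      obtain ⟨p, q, hp, hq, hd⟩ := htwo
      obtain ⟨v, hvT, hvsep⟩ := P2 t₁ h1 t₂ h2 hne
      rw [← SimpleGraph.eraseVerts_eraseVerts] at hvsep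
      have hvp : v ∈ p.support := SimpleGraph.mem_support_of_not_reachable_erase hvsep p
      have hvq : v ∈ q.support := SimpleGraph.mem_support_of_not_reachable_erase hvsep q
      rcases hd v hvp hvq with rfl | rfl
      · exact hvT h1
      · exact hvT h2
  · constructor
    · -- (1) → (3)
      intro P1
      constructor
      · intro t₁ h1 t₂ h2 hadj
        exact P1 t₁ h1 t₂ h2 hadj.ne (SimpleGraph.twoIVD_of_adj hadj)
      · rintro ⟨v, c, hc, u₁, hu1, u₂, hu2, hune, hs1, hs2⟩
        exact P1 u₁ hu1 u₂ hu2 hune (SimpleGraph.twoIVD_of_cycle hc hs1 hs2 hune)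
    · -- (3) → (1)
      rintro ⟨hind, hcyc⟩ t₁ h1 t₂ h2 hne htwo
      rcases SimpleGraph.adj_or_cycle_of_twoIVD hne htwo with hadj | ⟨v, c, hc, hs1, hs2⟩
      · exact hind t₁ h1 t₂ h2 hadj
      · exact hcyc ⟨v, c, hc, t₁, h1, t₂, h2, hne, hs1, hs2⟩
end

section
/- Let G be a graph, T ⊆ V(G), x ∈ V(G) \ T, and suppose G contains ℓ cycles C_1, …, C_ℓ, each passing through x and containing at least two terminals of T, such that any two of the cycles intersect only in vertices of T ∪ {x}. Then every multiway near-separator S of (G,T) with x ∉ S satisfies |S| ≥ ℓ. -/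
open SimpleGraph

variable {V : Type*}

lemma cycle_twoIVD [DecidableEq V] {G : SimpleGraph V} {u t₁ t₂ : V} (c : G.Walk u u) (hc : c.IsCycle)
    (h1 : t₁ ∈ c.support) (h2 : t₂ ∈ c.support) (hne : t₁ ≠ t₂) : TwoIVD G t₁ t₂ := by
  -- rotate so the cycle starts at t₁
  have hc₁ : (c.rotate t₁ h1).IsCycle := hc.rotate h1
  have h2' : t₂ ∈ (c.rotate t₁ h1).support := by
    rw [Walk.mem_support_iff]
    right
    rw [(Walk.support_rotate c t₁ h1).perm.mem_iff]
    rcases (Walk.mem_support_iff _).1 h2 with h | h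
    · subst h
      cases c with
      | nil => exact absurd rfl hc.ne_nil
      | cons h p => simpa using p.end_mem_support
    · exact h
  set c₁ := c.rotate t₁ h1 with hc₁def
  clear_value c₁
  cases c₁ with
  | nil => exact absurd rfl hc₁.ne_nil
  | @cons _ w _ hadj p =>
    rw [Walk.cons_isCycle_iff] at hc₁
    obtain ⟨hp, hedge⟩ := hc₁
    have h2p : t₂ ∈ p.support := by
      rcases (Walk.mem_support_iff _).1 h2' with h | h
      · exact absurd h.symm hne
      · simpa using h
    -- two paths: t₁ -hadj→ w →(takeUntil)→ t₂  and  (dropUntil t₂).reverse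
    have hspec := p.take_spec h2p
    have hnodup : ((p.takeUntil t₂ h2p).support ++ (p.dropUntil t₂ h2p).support.tail).Nodup := by
      rw [← Walk.support_append, hspec]; exact hp.support_nodup
    have htake : (p.takeUntil t₂ h2p).IsPath := hp.takeUntil h2p
    have hdrop : (p.dropUntil t₂ h2p).IsPath := hp.dropUntil h2p
    have ht₁take : t₁ ∉ (p.takeUntil t₂ h2p).support := by
      intro hmem
      have hend : t₁ ∈ (p.dropUntil t₂ h2p).support := Walk.end_mem_support _
      have ht₁tail : t₁ ∈ (p.dropUntil t₂ h2p).support.tail :=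
        Walk.end_mem_tail_support_of_ne hne.symm _
      exact (List.disjoint_of_nodup_append hnodup) hmem ht₁tail
    refine ⟨Walk.cons hadj (p.takeUntil t₂ h2p), (p.dropUntil t₂ h2p).reverse,
      ?_, hdrop.reverse, ?_⟩
    · rw [Walk.cons_isPath_iff]; exact ⟨htake, ht₁take⟩
    · intro y hy hy'
      by_contra hcon
      push_neg at hcon
      obtain ⟨hy1, hy2⟩ := hcon
      rw [Walk.support_cons, List.mem_cons] at hy
      rcases hy with h | h
      · exact hy1 h
      · rw [Walk.support_reverse, List.mem_reverse] at hy'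
        have hy'' : y ∈ (p.dropUntil t₂ h2p).support.tail := by
          rcases (Walk.mem_support_iff _).1 hy' with hh | hh
          · exact absurd hh hy2
          · exact hh
        exact (List.disjoint_of_nodup_append hnodup) h hy''

theorem stmt9 [Fintype V] (G : SimpleGraph V) (T : Set V) (x : V) (hx : x ∉ T)
    (ℓ : ℕ) (c : Fin ℓ → G.Walk x x)
    (hcyc : ∀ i, (c i).IsCycle)
    (hterm : ∀ i, ∃ t₁ ∈ T, ∃ t₂ ∈ T, t₁ ≠ t₂ ∧
      t₁ ∈ (c i).support ∧ t₂ ∈ (c i).support)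
    (hdisj : ∀ i j, i ≠ j → ∀ v, v ∈ (c i).support → v ∈ (c j).support →
      v ∈ T ∪ {x})
    (S : Set V) (hS : IsMWNS G T S) (hxS : x ∉ S) :
    ℓ ≤ S.ncard := by
  classical
  have key : ∀ i, ∃ s, s ∈ S ∧ s ∈ (c i).support := by
    intro i
    by_contra hcon
    push_neg at hcon
    -- the cycle survives in G.eraseVerts S
    have hedges : ∀ e ∈ (c i).edges, e ∈ (G.eraseVerts S).edgeSet := by
      intro e he
      induction e using Sym2.ind with
      | _ a b =>
        refine (⟨Walk.adj_of_mem_edges _ he, ?_, ?_⟩ : G.Adj a b ∧ a ∉ S ∧ b ∉ S)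
        · intro haS
          exact hcon a haS (Walk.fst_mem_support_of_mem_edges _ he)
        · intro hbS
          exact hcon b hbS (Walk.snd_mem_support_of_mem_edges _ he)
    have hc' : ((c i).transfer (G.eraseVerts S) hedges).IsCycle := (hcyc i).transfer hedges
    obtain ⟨t₁, ht₁, t₂, ht₂, hne, hm1, hm2⟩ := hterm i
    have hsup := Walk.support_transfer (c i) hedges
    exact hS.2 t₁ ht₁ t₂ ht₂ hne
      (cycle_twoIVD _ hc' (by rw [hsup]; exact hm1) (by rw [hsup]; exact hm2) hne)
  choose f hfS hfsup using key
  have hinj : Function.Injective f := by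
    intro i j hij
    by_contra hne
    have : f i ∈ T ∪ {x} := hdisj i j hne (f i) (hfsup i) (hij ▸ hfsup j)
    rcases this with h | h
    · exact hS.1 (hfS i) h
    · exact hxS (Set.mem_singleton_iff.1 h ▸ hfS i)
  have hS' : S.Finite := Set.toFinite S
  calc ℓ = Fintype.card (Fin ℓ) := (Fintype.card_fin ℓ).symm
    _ ≤ Fintype.card S := Fintype.card_le_of_injective
        (fun i => ⟨f i, hfS i⟩) (fun i j h => hinj (congrArg Subtype.val h))
    _ = S.ncard := (Nat.card_coe_set_eq S) ▸ (Nat.card_eq_fintype_card).symm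
end

section
/- Let (G, T, k) be an instance of Multiway Near-Separator and t ∈ T a terminal such that for every other terminal t' ∈ T \ {t} there do not exist two internally vertex-disjoint t–t' paths in G. Then S ⊆ V(G)\T with |S| ≤ k is a multiway near-separator for (G, T) if and only if there exists a multiway near-separator S' ⊆ V(G)\(T\{t}) for (G, T\{t}) with |S'| ≤ k. In particular, (G,T,k) is a yes-instance iff (G, T\{t}, k) is a yes-instance. -/
open SimpleGraph

variable {V : Type*}

private lemma erase_le (G : SimpleGraph V) (S : Set V) : G.eraseVerts S ≤ G :=
  fun _ _ h => h.1

private lemma support_adj {H : SimpleGraph V} {a b : V} (p : H.Walk a b) :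
    ∀ x ∈ p.support, x = b ∨ ∃ y, H.Adj x y := by
  induction p with
  | nil => intro x hx; rw [Walk.support_nil, List.mem_singleton] at hx; exact Or.inl hx
  | cons h p ih =>
    intro x hx
    rw [Walk.support_cons, List.mem_cons] at hx
    rcases hx with rfl | hx
    · exact Or.inr ⟨_, h⟩
    · exact ih x hx

private lemma transfer_erase {G : SimpleGraph V} {S S'' : Set V} {a b : V}
    (p : (G.eraseVerts S).Walk a b) (h : ∀ x ∈ p.support, x ∉ S'') :
    ∃ q : (G.eraseVerts S'').Walk a b, q.support = p.support ∧ (p.IsPath → q.IsPath) := by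
  have hedges : ∀ e ∈ p.edges, e ∈ (G.eraseVerts S'').edgeSet := by
    intro e he
    induction e using Sym2.ind with
    | _ u v =>
      obtain ⟨h1, -, -⟩ := p.adj_of_mem_edges he
      exact ⟨h1, h u (p.fst_mem_support_of_mem_edges he),
        h v (p.snd_mem_support_of_mem_edges he)⟩
  exact ⟨p.transfer _ hedges, Walk.support_transfer _ _, fun hp => hp.transfer _⟩

private lemma transfer_toG {G : SimpleGraph V} {S : Set V} {a b : V}
    (p : (G.eraseVerts S).Walk a b) :
    ∃ q : G.Walk a b, q.support = p.support ∧ (p.IsPath → q.IsPath) := by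
  have hedges : ∀ e ∈ p.edges, e ∈ G.edgeSet := fun e he =>
    (edgeSet_subset_edgeSet.2 (erase_le G S)) (p.edges_subset_edgeSet he)
  exact ⟨p.transfer _ hedges, Walk.support_transfer _ _, fun hp => hp.transfer _⟩

private lemma isPath_append {H : SimpleGraph V} {a b c : V} {p : H.Walk a b} {q : H.Walk b c}
    (hp : p.IsPath) (hq : q.IsPath) (h : ∀ x ∈ p.support, x ∈ q.support → x = b) :
    (p.append q).IsPath := by
  induction p with
  | nil => exact hq
  | cons hadj p' ih =>
    rw [Walk.cons_append]
    rw [Walk.cons_isPath_iff] at hp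
    refine (Walk.cons_isPath_iff _ _).2
      ⟨ih hp.1 hq (fun x hx hxq => h x (by simp [hx]) hxq), ?_⟩
    rw [Walk.mem_support_append_iff]
    rintro (hu | hu)
    · exact hp.2 hu
    · have := h _ (Walk.start_mem_support _) hu
      subst this
      exact hp.2 (Walk.end_mem_support p')

private lemma key [DecidableEq V] {G : SimpleGraph V} {S : Set V} {t t₁ t₂ : V}
    (hne1 : t₁ ≠ t) (hne2 : t₂ ≠ t)
    {p q : (G.eraseVerts S).Walk t₁ t₂} (hp : p.IsPath) (hq : q.IsPath)
    (hd : IntDisjoint p q) (htp : t ∈ p.support) :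
    TwoIVD G t t₁ := by
  set p1 := p.takeUntil t htp with hp1def
  set p2 := p.dropUntil t htp with hp2def
  have hp1 : p1.IsPath := hp.takeUntil htp
  have hp2 : p2.IsPath := hp.dropUntil htp
  have hsup : p.support = p1.support ++ p2.support.tail := by
    conv_lhs => rw [← Walk.take_spec p htp]
    rw [Walk.support_append]
  have hnd := hp.support_nodup
  rw [hsup, List.nodup_append] at hnd
  obtain ⟨-, -, hdisj⟩ := hnd
  have ht2p2 : t₂ ∈ p2.support.tail := by
    have := Walk.end_mem_support p2
    rw [Walk.support_eq_cons p2, List.mem_cons] at this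
    exact this.resolve_left hne2
  have ht2p1 : t₂ ∉ p1.support := fun hx => hdisj _ hx _ ht2p2 rfl
  have ht1p2 : t₁ ∉ p2.support := by
    rw [Walk.support_eq_cons p2, List.mem_cons]
    rintro (rfl | hx)
    · exact hne1 rfl
    · exact hdisj _ (Walk.start_mem_support p1) _ hx rfl
  have hsubp2 : ∀ x ∈ p2.support, x ∈ p.support := by
    intro x hx
    rw [Walk.support_eq_cons p2, List.mem_cons] at hx
    rcases hx with rfl | hx
    · exact htp
    · rw [hsup]; exact List.mem_append_right _ hx
  have hsubp1 : ∀ x ∈ p1.support, x ∈ p.support := by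
    intro x hx; rw [hsup]; exact List.mem_append_left _ hx
  have hr2 : (p2.append q.reverse).IsPath := by
    refine isPath_append hp2 hq.reverse ?_
    intro x hx hxq
    rw [Walk.support_reverse, List.mem_reverse] at hxq
    rcases hd x (hsubp2 x hx) hxq with rfl | rfl
    · exact absurd hx ht1p2
    · rfl
  obtain ⟨r1, hs1, hpath1⟩ := transfer_toG p1.reverse
  obtain ⟨r2, hs2, hpath2⟩ := transfer_toG (p2.append q.reverse)
  refine ⟨r1, r2, hpath1 hp1.reverse, hpath2 hr2, ?_⟩
  intro x hx1 hx2
  rw [hs1, Walk.support_reverse, List.mem_reverse] at hx1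
  rw [hs2, Walk.mem_support_append_iff] at hx2
  rcases hx2 with hx2 | hx2
  · rw [Walk.support_eq_cons p2, List.mem_cons] at hx2
    rcases hx2 with rfl | hx2
    · exact Or.inl rfl
    · exact absurd hx2 (fun h => hdisj _ hx1 _ h rfl)
  · rw [Walk.support_reverse, List.mem_reverse] at hx2
    rcases hd x (hsubp1 x hx1) hx2 with rfl | rfl
    · exact Or.inr rfl
    · exact absurd hx1 ht2p1

theorem stmt11 [Fintype V] (G : SimpleGraph V) (T : Set V) (k : ℕ)
    (t : V) (ht : t ∈ T)
    (hsep : ∀ t' ∈ T \ {t}, ¬ TwoIVD G t t') :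
    (∃ S : Set V, S ⊆ Tᶜ ∧ S.ncard ≤ k ∧ IsMWNS G T S) ↔
    (∃ S' : Set V, S' ⊆ (T \ {t})ᶜ ∧ S'.ncard ≤ k ∧ IsMWNS G (T \ {t}) S') := by
  classical
  constructor
  · rintro ⟨S, hSc, hk, hS1, hS2⟩
    exact ⟨S, fun x hx hxT => hSc hx hxT.1, hk, fun x hx hxT => hSc hx hxT.1,
      fun t₁ ht₁ t₂ ht₂ hne => hS2 t₁ ht₁.1 t₂ ht₂.1 hne⟩
  · rintro ⟨S', hS'c, hk, hS'1, hS'2⟩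
    have hTc : S' \ {t} ⊆ Tᶜ := by
      rintro x ⟨hxS, hxt⟩ hxT
      exact hS'c hxS ⟨hxT, hxt⟩
    refine ⟨S' \ {t}, hTc,
      le_trans (Set.ncard_le_ncard Set.diff_subset (Set.toFinite S')) hk, hTc, ?_⟩
    rintro t₁ ht₁ t₂ ht₂ hne ⟨p, q, hp, hq, hd⟩
    by_cases h1 : t₁ = t
    · subst h1
      obtain ⟨p', hsp, hpp⟩ := transfer_toG p
      obtain ⟨q', hsq, hpq⟩ := transfer_toG q
      exact hsep t₂ ⟨ht₂, fun h => hne h.symm⟩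
        ⟨p', q', hpp hp, hpq hq, fun x hx hy => hd x (hsp ▸ hx) (hsq ▸ hy)⟩
    by_cases h2 : t₂ = t
    · subst h2
      obtain ⟨p', hsp, hpp⟩ := transfer_toG p
      obtain ⟨q', hsq, hpq⟩ := transfer_toG q
      refine hsep t₁ ⟨ht₁, fun h => hne h⟩
        ⟨p'.reverse, q'.reverse, (hpp hp).reverse, (hpq hq).reverse, ?_⟩
      intro x hx hy
      rw [Walk.support_reverse, List.mem_reverse] at hx hy
      exact (hd x (hsp ▸ hx) (hsq ▸ hy)).symm
    by_cases htp : t ∈ p.support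
    · exact hsep t₁ ⟨ht₁, h1⟩ (key h1 h2 hp hq hd htp)
    by_cases htq : t ∈ q.support
    · exact hsep t₁ ⟨ht₁, h1⟩ (key h1 h2 hq hp (fun x hx hy => hd x hy hx) htq)
    have key2 : ∀ (r : (G.eraseVerts (S' \ {t})).Walk t₁ t₂), t ∉ r.support →
        ∀ x ∈ r.support, x ∉ S' := by
      intro r htr x hx hxS'
      have hxt : x ≠ t := fun h => htr (h ▸ hx)
      rcases support_adj r x hx with rfl | ⟨y, hadj⟩
      · exact hS'c hxS' ⟨ht₂, h2⟩
      · obtain ⟨-, hxn, -⟩ := hadj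
        exact hxn ⟨hxS', hxt⟩
    obtain ⟨p', hsp, hpp⟩ := transfer_erase p (key2 p htp)
    obtain ⟨q', hsq, hpq⟩ := transfer_erase q (key2 q htq)
    exact hS'2 t₁ ⟨ht₁, h1⟩ t₂ ⟨ht₂, h2⟩ hne
      ⟨p', q', hpp hp, hpq hq, fun x hx hy => hd x (hsp ▸ hx) (hsq ▸ hy)⟩
end
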